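/- Let R be the bilateral right shift on ℓ²(Z) and Λ = Σ_{x≥1} δ_x ⊗ δ_x* the projection onto the nonnegative-shifted half-line. If f : S¹ → ℂ is continuous and Λ f(R) Λ is a compact operator, then f = 0. -/

import Mathlib

open scoped Classical
open ContinuousLinearMap

open scoped ComplexInnerProductSpace ENNReal
open Topology Filter

/-- Let `R` be the bilateral right shift on ℓ²(ℤ) and `Λ` the projection
onto `span{δ_x : x ≥ 1}`.  If `f` is continuous on the unit circle (the spectrum of `R`)
and `Λ f(R) Λ` is compact, then `f` vanishes on the unit circle. -/
theorem stmt11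
    {H : Type*} [NormedAddCommGroup H] [InnerProductSpace ℂ H] [CompleteSpace H]
    (e : HilbertBasis ℤ ℂ H)
    (R : H →L[ℂ] H) (hR : R ∈ unitary (H →L[ℂ] H))
    (hshift : ∀ x : ℤ, R (e x) = e (x + 1))
    (hspec : spectrum ℂ R = Metric.sphere (0 : ℂ) 1)
    (Λ : H →L[ℂ] H) (hΛsa : IsSelfAdjoint Λ)
    (hΛ : ∀ x : ℤ, Λ (e x) = if 1 ≤ x then e x else 0)
    (f : ℂ → ℂ) (hf : ContinuousOn f (Metric.sphere (0 : ℂ) 1))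
    (hcpt : IsCompactOperator ⇑(Λ ∘L cfc f R ∘L Λ)) :
    ∀ z ∈ Metric.sphere (0 : ℂ) 1, f z = 0 := by
  haveI hsn : IsStarNormal R := ⟨hR.1.trans hR.2.symm⟩
  set T : H →L[ℂ] H := cfc f R with hT
  -- R preserves inner products
  have hinner : ∀ u w : H, ⟪R u, R w⟫ = ⟪u, w⟫ := by
    intro u w
    have h1 : (star R * R) w = w := by rw [hR.1]; rfl
    calc ⟪R u, R w⟫ = ⟪u, adjoint R (R w)⟫ := (adjoint_inner_right R u (R w)).symm
      _ = ⟪u, (star R * R) w⟫ := rfl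
      _ = ⟪u, w⟫ := by rw [h1]
  -- T commutes with R
  have hcomm : ∀ x : H, T (R x) = R (T x) := by
    intro x
    have h := cfc_commute_cfc (id : ℂ → ℂ) f R
    rw [cfc_id ℂ R] at h
    have := congrArg (fun A : H →L[ℂ] H => A x) h.symm
    simpa [ContinuousLinearMap.mul_apply] using this
  -- one-step diagonal invariance
  have hstep : ∀ m n : ℤ, ⟪T (e n), e m⟫ = ⟪T (e (n + 1)), e (m + 1)⟫ := by
    intro m n
    rw [← hshift n, ← hshift m, hcomm, hinner]
  set c : ℤ → ℂ := fun j => ⟪T (e 0), e j⟫ with hc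
  have key : ∀ n m : ℤ, ⟪T (e n), e m⟫ = c (m - n) := by
    intro n
    induction n using Int.induction_on with
    | zero => intro m; simp [hc]
    | succ i ih =>
      intro m
      have h := hstep (m - 1) i
      rw [sub_add_cancel] at h
      rw [← h, ih]
      congr 1; ring
    | pred i ih =>
      intro m
      have h := hstep m (-(i : ℤ) - 1)
      rw [show (-(i : ℤ) - 1 + 1) = -(i : ℤ) by ring] at h
      rw [h, ih]
      congr 1; ring
  -- matrix entries of the compressed operator
  have hΛentry : ∀ n m : ℤ, 1 ≤ n → 1 ≤ m →
      ⟪(Λ ∘L T ∘L Λ) (e n), e m⟫ = c (m - n) := by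
    intro n m hn hm
    have h1 : (Λ ∘L T ∘L Λ) (e n) = Λ (T (e n)) := by
      simp [ContinuousLinearMap.comp_apply, hΛ n, if_pos hn]
    rw [h1]
    have h2 : ⟪Λ (T (e n)), e m⟫ = ⟪T (e n), Λ (e m)⟫ := by
      calc ⟪Λ (T (e n)), e m⟫ = ⟪adjoint Λ (T (e n)), e m⟫ := by
            rw [← ContinuousLinearMap.star_eq_adjoint, hΛsa.star_eq]
        _ = ⟪T (e n), Λ (e m)⟫ := adjoint_inner_left Λ (e m) (T (e n))
    rw [h2, hΛ m, if_pos hm, key]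
  -- basis vectors have norm 1
  have hnorm : ∀ i : ℤ, ‖(e i : H)‖ = 1 := fun i => e.orthonormal.1 i
  -- compactness: image of unit ball contained in a compact set
  obtain ⟨K, hK, hKsub⟩ :=
    hcpt.image_subset_compact_of_bounded (Metric.isBounded_closedBall (x := (0 : H)) (r := 1))
  -- coefficient decay for any fixed vector
  have hdecay : ∀ v : H, Filter.Tendsto (fun i : ℤ => ⟪e i, v⟫) Filter.cofinite (𝓝 0) := by
    intro v
    have hmem : Memℓp (⇑(e.repr v)) 2 := lp.memℓp (e.repr v)
    have hsum : Summable fun i : ℤ => ‖e.repr v i‖ ^ (2 : ℝ) := by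
      have := hmem.summable (by norm_num : (0 : ℝ) < (2 : ℝ≥0∞).toReal)
      simpa using this
    have h0 : Filter.Tendsto (fun i : ℤ => ‖e.repr v i‖ ^ (2 : ℝ)) Filter.cofinite (𝓝 0) :=
      hsum.tendsto_cofinite_zero
    have h1 : Filter.Tendsto (fun i : ℤ => ‖e.repr v i‖) Filter.cofinite (𝓝 0) := by
      have := (Real.continuous_sqrt.tendsto 0).comp h0
      simp only [Function.comp_def, Real.sqrt_zero] at this
      convert this using 2 with i
      rw [show ((2 : ℝ)) = ((2 : ℕ) : ℝ) by norm_num, Real.rpow_natCast]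
      exact (Real.sqrt_sq (norm_nonneg _)).symm
    have h2 : Filter.Tendsto (fun i : ℤ => e.repr v i) Filter.cofinite (𝓝 0) :=
      tendsto_zero_iff_norm_tendsto_zero.mpr h1
    convert h2 using 2 with i
    exact (e.repr_apply_apply v i).symm
  -- each diagonal constant vanishes
  have hc0 : ∀ j : ℤ, c j = 0 := by
    intro j
    set n₀ : ℤ := max 1 (1 - j) with hn₀
    set s : ℕ → H := fun k => (Λ ∘L T ∘L Λ) (e (n₀ + k)) with hs
    have hsK : ∀ k, s k ∈ K := by
      intro k
      apply hKsub
      exact ⟨e (n₀ + k), by simp [Metric.mem_closedBall, hnorm], rfl⟩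
    obtain ⟨v, hv, φ, hφ, htend⟩ := hK.tendsto_subseq hsK
    -- constant value along the diagonal
    have hval : ∀ k : ℕ, ⟪s (φ k), e (n₀ + φ k + j)⟫ = c j := by
      intro k
      have h1 : (1 : ℤ) ≤ n₀ + φ k := le_add_of_le_of_nonneg (le_max_left _ _) (by positivity)
      have h2 : (1 : ℤ) ≤ n₀ + φ k + j := by
        have : (1 - j : ℤ) ≤ n₀ := le_max_right _ _
        omega
      have := hΛentry (n₀ + φ k) (n₀ + φ k + j) h1 h2
      rw [show (n₀ + φ k + j - (n₀ + φ k) : ℤ) = j by ring] at this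
      exact this
    -- index sequence tends to atTop
    have hmk : Filter.Tendsto (fun k : ℕ => (n₀ + φ k + j : ℤ)) Filter.atTop Filter.atTop := by
      have h1 : Filter.Tendsto (fun k : ℕ => ((φ k : ℕ) : ℤ)) Filter.atTop Filter.atTop :=
        tendsto_natCast_atTop_atTop.comp hφ.tendsto_atTop
      have h2 := Filter.tendsto_atTop_add_const_left Filter.atTop n₀ h1
      have h3 := Filter.tendsto_atTop_add_const_right Filter.atTop j h2
      exact h3
    -- second term tends to zero
    have hB : Filter.Tendsto (fun k : ℕ => ⟪v, e (n₀ + φ k + j)⟫) Filter.atTop (𝓝 0) := by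
      have hv0 : Filter.Tendsto (fun i : ℤ => ⟪v, e i⟫) Filter.cofinite (𝓝 0) := by
        have := (continuous_star.tendsto (0 : ℂ)).comp (hdecay v)
        simp only [Function.comp_def, star_zero] at this
        convert this using 2 with i
        rw [← inner_conj_symm]
        rfl
      have hv1 : Filter.Tendsto (fun i : ℤ => ⟪v, e i⟫) Filter.atTop (𝓝 0) :=
        hv0.mono_left Filter.atTop_le_cofinite
      exact hv1.comp hmk
    -- first term tends to zero
    have hA : Filter.Tendsto (fun k : ℕ => ⟪s (φ k) - v, e (n₀ + φ k + j)⟫)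
        Filter.atTop (𝓝 0) := by
      apply tendsto_zero_iff_norm_tendsto_zero.mpr
      have hd : Filter.Tendsto (fun k : ℕ => ‖s (φ k) - v‖) Filter.atTop (𝓝 0) := by
        have := tendsto_iff_norm_sub_tendsto_zero.mp htend
        simpa [Function.comp_def] using this
      refine squeeze_zero (fun k => norm_nonneg _) (fun k => ?_) hd
      calc ‖⟪s (φ k) - v, e (n₀ + φ k + j)⟫‖ ≤ ‖s (φ k) - v‖ * ‖(e (n₀ + φ k + j) : H)‖ :=
            norm_inner_le_norm _ _
        _ = ‖s (φ k) - v‖ := by rw [hnorm, mul_one]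
    -- combine
    have hsum : Filter.Tendsto (fun k : ℕ =>
        ⟪s (φ k) - v, e (n₀ + φ k + j)⟫ + ⟪v, e (n₀ + φ k + j)⟫) Filter.atTop (𝓝 0) := by
      simpa using hA.add hB
    have heq : (fun k : ℕ =>
        ⟪s (φ k) - v, e (n₀ + φ k + j)⟫ + ⟪v, e (n₀ + φ k + j)⟫) = fun _ => c j := by
      funext k
      rw [inner_sub_left, sub_add_cancel]
      exact hval k
    rw [heq] at hsum
    exact (tendsto_nhds_unique hsum tendsto_const_nhds).symm
  -- T vanishes on all basis vectors
  have hTe : ∀ n : ℤ, T (e n) = 0 := by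
    intro n
    have hcoef : ∀ m : ℤ, e.repr (T (e n)) m = 0 := by
      intro m
      rw [e.repr_apply_apply, ← inner_conj_symm, key, hc0, map_zero]
    have : e.repr (T (e n)) = 0 := by
      ext m; simpa using hcoef m
    have := congrArg e.repr.symm this
    rwa [e.repr.symm_apply_apply, map_zero] at this
  -- hence T = 0
  have hT0 : T = 0 := by
    have hdense : Dense (Submodule.span ℂ (Set.range ⇑e) : Set H) :=
      Submodule.dense_iff_topologicalClosure_eq_top.mpr e.dense_span
    refine ContinuousLinearMap.ext_on hdense ?_
    rintro x ⟨i, rfl⟩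
    simp [hTe i]
  -- spectral mapping
  haveI : Nontrivial H := ⟨e 0, 0, fun h => by simpa [hnorm 0] using congrArg norm h⟩
  have hmap : f '' spectrum ℂ R = spectrum ℂ T :=
    (cfc_map_spectrum (f := f) (a := R) hsn (by rw [hspec]; exact hf)).symm
  rw [hT0, spectrum.zero_eq, hspec] at hmap
  intro z hz
  have : f z ∈ ({0} : Set ℂ) := hmap ▸ ⟨z, hz, rfl⟩
  simpa using this
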